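/- Let ε ∈ (0,1), let a₁, …, aₙ be distinct positive reals with n ≥ 2 and with OPT_L({a₁,…,aₙ}) ≤ 2, and let 0 < δ ≤ (ε/(9n)) · max_i a_i. Define ã_i := δ·⌈a_i/δ⌉. Let A, B ⊆ {1,…,n} be nonempty disjoint index sets containing some index attaining max_i ã_i and minimizing the rounded ratio max{Σ_{i∈A} ã_i / Σ_{i∈B} ã_i, Σ_{i∈B} ã_i / Σ_{i∈A} ã_i} among all such pairs of index sets. Then the unrounded sets X := {a_i : i ∈ A} and Y := {a_i : i ∈ B} satisfy R(X,Y) ≤ (1+ε) · OPT_L({a₁,…,aₙ}). -/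

import Mathlib

/-- The ratio `R(X,Y) = max{Σ(X)/Σ(Y), Σ(Y)/Σ(X)}` of two finite sets of reals. -/
noncomputable def ratio (X Y : Finset ℝ) : ℝ :=
  max (X.sum id / Y.sum id) (Y.sum id / X.sum id)

/-- `OPT_L(I)`: the minimum ratio over all nonempty disjoint subsets `X, Y ⊆ I` such that
`max(I) ∈ X ∪ Y` (i.e. some element of `X ∪ Y` is an upper bound of `I`). -/
noncomputable def OPTL (I : Finset ℝ) : ℝ :=
  sInf {r | ∃ X Y : Finset ℝ, X ⊆ I ∧ Y ⊆ I ∧ Disjoint X Y ∧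
    X.Nonempty ∧ Y.Nonempty ∧ (∃ m ∈ X ∪ Y, ∀ x ∈ I, x ≤ m) ∧ r = ratio X Y}

lemma key_ineq (ε r : ℝ) (hε : 0 < ε) (hε1 : ε < 1) (hr1 : 1 ≤ r) :
    r + 2 * ε / 9 ≤ (1 + ε) * r * (1 - ε / 3) := by
  nlinarith [mul_le_mul_of_nonneg_left hr1 (show (0:ℝ) ≤ 2*ε/3 - ε^2/3 by nlinarith)]

set_option maxHeartbeats 1000000 in
lemma arith_round (ε M d r sA sB tA tB sA' sB' tA' tB' : ℝ)
    (hε : 0 < ε) (hε1 : ε < 1) (hM : 0 < M) (hd : 0 ≤ d) (hdM : d ≤ ε * M / 9)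
    (hsA' : 0 < sA') (hsB' : 0 < sB')
    (htA'1 : sA' ≤ tA') (htA'2 : tA' ≤ sA' + d)
    (htB'1 : sB' ≤ tB') (htB'2 : tB' ≤ sB' + d)
    (hmax' : M ≤ sA' ∨ M ≤ sB')
    (hr : r = max (sA' / sB') (sB' / sA')) (hr2 : r ≤ 2)
    (hsA : 0 < sA) (hsB : 0 < sB)
    (htA1 : sA ≤ tA) (htA2 : tA ≤ sA + d)
    (htB1 : sB ≤ tB) (htB2 : tB ≤ sB + d)
    (hmaxt : M ≤ tA ∨ M ≤ tB)
    (hopt : max (tA / tB) (tB / tA) ≤ max (tA' / tB') (tB' / tA')) :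
    max (sA / sB) (sB / sA) ≤ (1 + ε) * r := by
  have htA : 0 < tA := lt_of_lt_of_le hsA htA1
  have htB : 0 < tB := lt_of_lt_of_le hsB htB1
  have htA' : 0 < tA' := lt_of_lt_of_le hsA' htA'1
  have htB' : 0 < tB' := lt_of_lt_of_le hsB' htB'1
  have P1 : sA' ≤ r * sB' := by
    have h := le_max_left (sA' / sB') (sB' / sA')
    rw [← hr, div_le_iff₀ hsB'] at h
    linarith
  have P2 : sB' ≤ r * sA' := by
    have h := le_max_right (sA' / sB') (sB' / sA')
    rw [← hr, div_le_iff₀ hsA'] at h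
    linarith
  have hr0 : 0 < r := by
    rw [hr]
    exact lt_of_lt_of_le (div_pos hsA' hsB') (le_max_left _ _)
  have hr1 : 1 ≤ r := by
    nlinarith [mul_le_mul_of_nonneg_left P2 hr0.le, mul_pos hr0 hsA']
  have hM2 : M ≤ 2 * sA' ∧ M ≤ 2 * sB' := by
    rcases hmax' with h | h
    · exact ⟨by linarith, by nlinarith⟩
    · exact ⟨by nlinarith, by linarith⟩
  have hq' : max (tA' / tB') (tB' / tA') ≤ r + 2 * ε / 9 := by
    apply max_le
    · rw [div_le_iff₀ htB']
      linarith [mul_le_mul_of_nonneg_left htB'1 hr0.le,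
        mul_le_mul_of_nonneg_left hM2.2 hε.le,
        mul_le_mul_of_nonneg_left htB'1 hε.le]
    · rw [div_le_iff₀ htA']
      linarith [mul_le_mul_of_nonneg_left htA'1 hr0.le,
        mul_le_mul_of_nonneg_left hM2.1 hε.le,
        mul_le_mul_of_nonneg_left htA'1 hε.le]
  have hq2 : r + 2 * ε / 9 ≤ 3 := by linarith
  have Q1 : tA ≤ (r + 2 * ε / 9) * tB := by
    have h := le_trans (le_trans (le_max_left (tA / tB) (tB / tA)) hopt) hq'
    rw [div_le_iff₀ htB] at h; linarith
  have Q2 : tB ≤ (r + 2 * ε / 9) * tA := by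
    have h := le_trans (le_trans (le_max_right (tA / tB) (tB / tA)) hopt) hq'
    rw [div_le_iff₀ htA] at h; linarith
  have hT : M ≤ 3 * tA ∧ M ≤ 3 * tB := by
    rcases hmaxt with h | h
    · exact ⟨by linarith, by linarith [mul_le_mul_of_nonneg_right hq2 htB.le]⟩
    · exact ⟨by linarith [mul_le_mul_of_nonneg_right hq2 htA.le], by linarith⟩
  have hdA : d ≤ ε * tA / 3 := by
    linarith [mul_le_mul_of_nonneg_left hT.1 hε.le]
  have hdB : d ≤ ε * tB / 3 := by
    linarith [mul_le_mul_of_nonneg_left hT.2 hε.le]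
  have hsB2 : (1 - ε / 3) * tB ≤ sB := by linarith
  have hsA2 : (1 - ε / 3) * tA ≤ sA := by linarith
  have key : r + 2 * ε / 9 ≤ (1 + ε) * r * (1 - ε / 3) := key_ineq ε r hε hε1 hr1
  have hpr : 0 ≤ (1 + ε) * r := by positivity
  apply max_le
  · rw [div_le_iff₀ hsB]
    calc sA ≤ (r + 2 * ε / 9) * tB := le_trans htA1 Q1
    _ ≤ ((1 + ε) * r * (1 - ε / 3)) * tB := mul_le_mul_of_nonneg_right key htB.le
    _ = ((1 + ε) * r) * ((1 - ε / 3) * tB) := by ring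
    _ ≤ ((1 + ε) * r) * sB := mul_le_mul_of_nonneg_left hsB2 hpr
  · rw [div_le_iff₀ hsA]
    calc sB ≤ (r + 2 * ε / 9) * tA := le_trans htB1 Q2
    _ ≤ ((1 + ε) * r * (1 - ε / 3)) * tA := mul_le_mul_of_nonneg_right key htA.le
    _ = ((1 + ε) * r) * ((1 - ε / 3) * tA) := by ring
    _ ≤ ((1 + ε) * r) * sA := mul_le_mul_of_nonneg_left hsA2 hpr

/-- **Rounding II (Lemma 4.11).** Suppose `OPT_L({a₁,…,aₙ}) ≤ 2` and
`0 < δ ≤ (ε/(9n))·max_i a_i`. If the index sets `A, B` form an optimal solution for the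
instance rounded up to multiples of `δ` (nonempty, disjoint, containing an index attaining
the rounded maximum, and minimizing the rounded ratio among all such pairs), then the
corresponding unrounded sets `X = {a_i : i ∈ A}`, `Y = {a_i : i ∈ B}` satisfy
`R(X,Y) ≤ (1+ε) · OPT_L({a₁,…,aₙ})`. -/
theorem rounding_two (ε : ℝ) (hε : ε ∈ Set.Ioo (0 : ℝ) 1)
    (n : ℕ) (hn : 2 ≤ n) (a : Fin n → ℝ)
    (hinj : Function.Injective a) (hpos : ∀ i, 0 < a i)
    (hopt : OPTL (Finset.univ.image a) ≤ 2)
    (δ : ℝ) (hδ0 : 0 < δ)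
    (hδ : δ ≤ ε / (9 * n) *
      (Finset.univ.sup' ⟨⟨0, by omega⟩, Finset.mem_univ _⟩ a))
    (A B : Finset (Fin n)) (hA : A.Nonempty) (hB : B.Nonempty) (hAB : Disjoint A B)
    (hmax : ∃ i ∈ A ∪ B, ∀ j, δ * (⌈a j / δ⌉ : ℝ) ≤ δ * (⌈a i / δ⌉ : ℝ))
    (hoptAB : ∀ A' B' : Finset (Fin n), A'.Nonempty → B'.Nonempty → Disjoint A' B' →
      (∃ i ∈ A' ∪ B', ∀ j, δ * (⌈a j / δ⌉ : ℝ) ≤ δ * (⌈a i / δ⌉ : ℝ)) →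
      max ((∑ i ∈ A, δ * (⌈a i / δ⌉ : ℝ)) / (∑ i ∈ B, δ * (⌈a i / δ⌉ : ℝ)))
          ((∑ i ∈ B, δ * (⌈a i / δ⌉ : ℝ)) / (∑ i ∈ A, δ * (⌈a i / δ⌉ : ℝ)))
      ≤ max ((∑ i ∈ A', δ * (⌈a i / δ⌉ : ℝ)) / (∑ i ∈ B', δ * (⌈a i / δ⌉ : ℝ)))
            ((∑ i ∈ B', δ * (⌈a i / δ⌉ : ℝ)) / (∑ i ∈ A', δ * (⌈a i / δ⌉ : ℝ)))) :
    ratio (A.image a) (B.image a) ≤ (1 + ε) * OPTL (Finset.univ.image a) := by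
  obtain ⟨hε0, hε1⟩ := hε
  set I : Finset ℝ := Finset.univ.image a with hI
  set M : ℝ := Finset.univ.sup' ⟨⟨0, by omega⟩, Finset.mem_univ _⟩ a with hMdef
  -- basic facts about M
  obtain ⟨i₀, -, hi₀⟩ := Finset.exists_mem_eq_sup'
    (⟨⟨0, by omega⟩, Finset.mem_univ _⟩ : (Finset.univ : Finset (Fin n)).Nonempty) a
  have hMub : ∀ j, a j ≤ M := fun j => Finset.le_sup' a (Finset.mem_univ j)
  have haM : a i₀ = M := hi₀.symm
  have hM0 : 0 < M := by rw [← haM]; exact hpos i₀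
  -- rounding facts
  have hceil1 : ∀ i, a i ≤ δ * (⌈a i / δ⌉ : ℝ) := by
    intro i
    have h1 : a i / δ ≤ (⌈a i / δ⌉ : ℝ) := Int.le_ceil _
    have h3 : δ * (a i / δ) = a i := by field_simp
    nlinarith [mul_le_mul_of_nonneg_left h1 hδ0.le]
  have hceil2 : ∀ i, δ * (⌈a i / δ⌉ : ℝ) ≤ a i + δ := by
    intro i
    have h1 : (⌈a i / δ⌉ : ℝ) < a i / δ + 1 := Int.ceil_lt_add_one _
    have h3 : δ * (a i / δ) = a i := by field_simp
    nlinarith [mul_lt_mul_of_pos_left h1 hδ0]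
  have hceilmono : ∀ i j : Fin n, a j ≤ a i →
      δ * (⌈a j / δ⌉ : ℝ) ≤ δ * (⌈a i / δ⌉ : ℝ) := by
    intro i j h
    have : a j / δ ≤ a i / δ := by gcongr
    have h2 : (⌈a j / δ⌉ : ℝ) ≤ (⌈a i / δ⌉ : ℝ) := by
      exact_mod_cast Int.ceil_le_ceil this
    nlinarith [mul_le_mul_of_nonneg_left h2 hδ0.le]
  -- sum bounds for any index set
  have hsum1 : ∀ C : Finset (Fin n), (∑ i ∈ C, a i) ≤ ∑ i ∈ C, δ * (⌈a i / δ⌉ : ℝ) :=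
    fun C => Finset.sum_le_sum (fun i _ => hceil1 i)
  have hsum2 : ∀ C : Finset (Fin n),
      (∑ i ∈ C, δ * (⌈a i / δ⌉ : ℝ)) ≤ (∑ i ∈ C, a i) + n * δ := by
    intro C
    calc (∑ i ∈ C, δ * (⌈a i / δ⌉ : ℝ)) ≤ ∑ i ∈ C, (a i + δ) :=
        Finset.sum_le_sum (fun i _ => hceil2 i)
    _ = (∑ i ∈ C, a i) + C.card * δ := by
        rw [Finset.sum_add_distrib, Finset.sum_const, nsmul_eq_mul]
    _ ≤ (∑ i ∈ C, a i) + n * δ := by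
        have : (C.card : ℝ) ≤ n := by
          exact_mod_cast le_trans (Finset.card_le_univ C) (le_of_eq (by simp))
        nlinarith
  have hspos : ∀ C : Finset (Fin n), C.Nonempty → 0 < ∑ i ∈ C, a i :=
    fun C hC => Finset.sum_pos (fun i _ => hpos i) hC
  -- d bound
  have hn0 : (0:ℝ) < n := by positivity
  have hdM : (n:ℝ) * δ ≤ ε * M / 9 := by
    have h1 : (n:ℝ) * δ ≤ (n:ℝ) * (ε / (9 * n) * M) :=
      mul_le_mul_of_nonneg_left hδ hn0.le
    have h2 : (n:ℝ) * (ε / (9 * n) * M) = ε * M / 9 := by field_simp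
    linarith
  -- OPTL is attained
  set S : Set ℝ := {r | ∃ X Y : Finset ℝ, X ⊆ I ∧ Y ⊆ I ∧ Disjoint X Y ∧
    X.Nonempty ∧ Y.Nonempty ∧ (∃ m ∈ X ∪ Y, ∀ x ∈ I, x ≤ m) ∧ r = ratio X Y} with hS
  have hOPTL : OPTL I = sInf S := rfl
  have hSne : S.Nonempty := by
    obtain ⟨j₀, hj₀⟩ := Fintype.exists_ne_of_one_lt_card (by simp; omega) i₀
    refine ⟨ratio {a i₀} {a j₀}, {a i₀}, {a j₀}, ?_, ?_, ?_, ⟨_, Finset.mem_singleton_self _⟩,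
      ⟨_, Finset.mem_singleton_self _⟩, ⟨a i₀, ?_, ?_⟩, rfl⟩
    · simp [hI]
    · simp [hI]
    · simp only [Finset.disjoint_singleton_left, Finset.mem_singleton]
      exact fun h => hj₀ (hinj h).symm
    · simp
    · rintro x hx
      obtain ⟨j, -, rfl⟩ := Finset.mem_image.mp hx
      exact le_trans (hMub j) haM.ge
  have hSfin : S.Finite := by
    apply Set.Finite.subset
      ((I.powerset ×ˢ I.powerset).finite_toSet.image (fun p => ratio p.1 p.2))
    rintro r ⟨X, Y, hX, hY, -, -, -, -, rfl⟩
    exact ⟨(X, Y), by simp [Finset.mem_powerset, hX, hY], rfl⟩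
  have hmemInf : sInf S ∈ S := hSne.csInf_mem hSfin
  obtain ⟨X, Y, hXI, hYI, hXY, hXne, hYne, ⟨m, hm, hmub⟩, hrEq⟩ := hmemInf
  -- index sets for the optimal pair
  set A' : Finset (Fin n) := Finset.univ.filter (fun i => a i ∈ X) with hA'
  set B' : Finset (Fin n) := Finset.univ.filter (fun i => a i ∈ Y) with hB'
  have hXA : A'.image a = X := by
    ext x
    simp only [Finset.mem_image, hA', Finset.mem_filter, Finset.mem_univ, true_and]
    constructor
    · rintro ⟨i, hi, rfl⟩; exact hi
    · intro hx
      obtain ⟨i, -, rfl⟩ := Finset.mem_image.mp (hXI hx)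
      exact ⟨i, hx, rfl⟩
  have hYB : B'.image a = Y := by
    ext x
    simp only [Finset.mem_image, hB', Finset.mem_filter, Finset.mem_univ, true_and]
    constructor
    · rintro ⟨i, hi, rfl⟩; exact hi
    · intro hx
      obtain ⟨i, -, rfl⟩ := Finset.mem_image.mp (hYI hx)
      exact ⟨i, hx, rfl⟩
  have hinjOn : ∀ C : Finset (Fin n), (C.image a).sum id = ∑ i ∈ C, a i := by
    intro C
    rw [Finset.sum_image (fun x _ y _ h => hinj h)]
    simp
  have hsX : X.sum id = ∑ i ∈ A', a i := by rw [← hXA, hinjOn]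
  have hsY : Y.sum id = ∑ i ∈ B', a i := by rw [← hYB, hinjOn]
  have hA'ne : A'.Nonempty := by
    obtain ⟨x, hx⟩ := hXne
    obtain ⟨i, -, rfl⟩ := Finset.mem_image.mp (hXI hx)
    exact ⟨i, by simp [hA', hx]⟩
  have hB'ne : B'.Nonempty := by
    obtain ⟨x, hx⟩ := hYne
    obtain ⟨i, -, rfl⟩ := Finset.mem_image.mp (hYI hx)
    exact ⟨i, by simp [hB', hx]⟩
  have hA'B' : Disjoint A' B' := by
    rw [Finset.disjoint_left]
    intro i hiA hiB
    simp only [hA', hB', Finset.mem_filter] at hiA hiB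
    exact (Finset.disjoint_left.mp hXY) hiA.2 hiB.2
  have hmaxA'B' : ∃ i ∈ A' ∪ B', ∀ j, δ * (⌈a j / δ⌉ : ℝ) ≤ δ * (⌈a i / δ⌉ : ℝ) := by
    have hmI : m ∈ I := by
      rcases Finset.mem_union.mp hm with h | h
      · exact hXI h
      · exact hYI h
    obtain ⟨i, -, rfl⟩ := Finset.mem_image.mp hmI
    refine ⟨i, ?_, fun j => hceilmono i j (hmub (a j) (Finset.mem_image_of_mem a (Finset.mem_univ j)))⟩
    rcases Finset.mem_union.mp hm with h | h
    · exact Finset.mem_union_left _ (by simp [hA', h])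
    · exact Finset.mem_union_right _ (by simp [hB', h])
  -- the main hypothesis applied to A', B'
  have hoptineq := hoptAB A' B' hA'ne hB'ne hA'B' hmaxA'B'
  -- M ≤ one of the optimal sums
  have hmaxopt : M ≤ ∑ i ∈ A', a i ∨ M ≤ ∑ i ∈ B', a i := by
    have hMm : M ≤ m := hmub M (by
      rw [← haM, hI]
      exact Finset.mem_image_of_mem a (Finset.mem_univ i₀))
    rcases Finset.mem_union.mp hm with h | h
    · left
      rw [← hsX]
      refine le_trans hMm (Finset.single_le_sum (f := id) (fun x hx => ?_) h)
      obtain ⟨j, -, rfl⟩ := Finset.mem_image.mp (hXI hx)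
      exact (hpos j).le
    · right
      rw [← hsY]
      refine le_trans hMm (Finset.single_le_sum (f := id) (fun x hx => ?_) h)
      obtain ⟨j, -, rfl⟩ := Finset.mem_image.mp (hYI hx)
      exact (hpos j).le
  -- M ≤ one of the rounded sums of A, B
  have hmaxt : M ≤ (∑ i ∈ A, δ * (⌈a i / δ⌉ : ℝ)) ∨ M ≤ (∑ i ∈ B, δ * (⌈a i / δ⌉ : ℝ)) := by
    obtain ⟨i, hi, hiub⟩ := hmax
    have hMi : M ≤ δ * (⌈a i / δ⌉ : ℝ) := by
      rw [← haM]; exact le_trans (hceil1 i₀) (hiub i₀)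
    rcases Finset.mem_union.mp hi with h | h
    · left
      exact le_trans hMi (Finset.single_le_sum
        (fun j _ => le_trans (hpos j).le (hceil1 j)) h)
    · right
      exact le_trans hMi (Finset.single_le_sum
        (fun j _ => le_trans (hpos j).le (hceil1 j)) h)
  -- rewrite the goal
  have hgoal : ratio (A.image a) (B.image a) =
      max ((∑ i ∈ A, a i) / (∑ i ∈ B, a i)) ((∑ i ∈ B, a i) / (∑ i ∈ A, a i)) := by
    rw [ratio, hinjOn, hinjOn]
  have hrval : OPTL I = max ((∑ i ∈ A', a i) / (∑ i ∈ B', a i))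
      ((∑ i ∈ B', a i) / (∑ i ∈ A', a i)) := by
    rw [hOPTL, hrEq, ratio, hsX, hsY]
  rw [hgoal, hrval]
  have hopt2 : max ((∑ i ∈ A', a i) / (∑ i ∈ B', a i))
      ((∑ i ∈ B', a i) / (∑ i ∈ A', a i)) ≤ 2 := hrval ▸ hopt
  exact arith_round ε M ((n:ℝ) * δ) _ (∑ i ∈ A, a i) (∑ i ∈ B, a i)
    (∑ i ∈ A, δ * (⌈a i / δ⌉ : ℝ)) (∑ i ∈ B, δ * (⌈a i / δ⌉ : ℝ))
    (∑ i ∈ A', a i) (∑ i ∈ B', a i)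
    (∑ i ∈ A', δ * (⌈a i / δ⌉ : ℝ)) (∑ i ∈ B', δ * (⌈a i / δ⌉ : ℝ))
    hε0 hε1 hM0 (by positivity) hdM
    (hspos A' hA'ne) (hspos B' hB'ne)
    (hsum1 A') (hsum2 A') (hsum1 B') (hsum2 B')
    hmaxopt rfl hopt2
    (hspos A hA) (hspos B hB)
    (hsum1 A) (hsum2 A) (hsum1 B) (hsum2 B)
    hmaxt hoptineq
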